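/- Let v₁,…,v_l be nonzero vectors in ℝⁿ and let n* be a real number with n* > l. Then the (l+1)×(l+1) matrix G with entries G₀₀ = n*, G₀ⱼ = Gⱼ₀ = ‖vⱼ‖², Gⱼⱼ = ‖vⱼ‖⁴ for j = 1,…,l, and Gᵢⱼ = 0 for distinct i, j ≥ 1, is symmetric positive definite. -/

import Mathlib

open Matrix

/-- Positive definiteness of the Gram matrix `G` of the NN-(M)DOOLSE problem:
if `v₁,…,v_l ∈ ℝⁿ` are nonzero and `n* > l`, then the `(l+1)×(l+1)` matrix
with `G₀₀ = n*`, `G₀ⱼ = Gⱼ₀ = ‖vⱼ‖²`, `Gⱼⱼ = ‖vⱼ‖⁴` and zeros elsewhere is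
symmetric positive definite. -/
theorem stmt_15 {n l : ℕ}
    (v : Fin l → (Fin n → ℝ)) (hv : ∀ j, v j ≠ 0)
    (nv : Fin l → ℝ) (hnv : ∀ j, nv j = ∑ i, v j i ^ 2)
    (nstar : ℝ) (hnstar : (l : ℝ) < nstar)
    (G : Matrix (Fin (l + 1)) (Fin (l + 1)) ℝ)
    (hG00 : G 0 0 = nstar)
    (hG0j : ∀ j : Fin l, G 0 j.succ = nv j ∧ G j.succ 0 = nv j)
    (hGjj : ∀ j : Fin l, G j.succ j.succ = nv j ^ 2)
    (hGij : ∀ i j : Fin l, i ≠ j → G i.succ j.succ = 0) :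
    G.IsSymm ∧ G.PosDef := by
  have hnvpos : ∀ j, 0 < nv j := by
    intro j
    rw [hnv]
    have h : ∃ i, v j i ≠ 0 := by
      by_contra h
      push_neg at h
      exact hv j (funext fun i => h i)
    obtain ⟨i, hi⟩ := h
    exact Finset.sum_pos' (fun i _ => sq_nonneg _)
      ⟨i, Finset.mem_univ i, by positivity⟩
  have hsymm : G.IsSymm := by
    rw [Matrix.IsSymm]
    ext i j
    rw [Matrix.transpose_apply]
    refine Fin.cases ?_ (fun i' => ?_) i <;> refine Fin.cases ?_ (fun j' => ?_) j
    · rfl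
    · rw [(hG0j j').1, (hG0j j').2]
    · rw [(hG0j i').1, (hG0j i').2]
    · rcases eq_or_ne i' j' with h | h
      · rw [h]
      · rw [hGij i' j' h, hGij j' i' h.symm]
  refine ⟨hsymm, Matrix.PosDef.of_dotProduct_mulVec_pos ?_ ?_⟩
  · rw [Matrix.IsHermitian, conjTranspose]
    ext i j
    simpa using congrFun (congrFun hsymm.eq i) j
  · intro x hx
    have h0 : (G *ᵥ x) 0 = nstar * x 0 + ∑ j : Fin l, nv j * x j.succ := by
      simp only [mulVec, dotProduct]
      rw [Fin.sum_univ_succ, hG00]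
      exact congrArg _ (Finset.sum_congr rfl fun j _ => by rw [(hG0j j).1])
    have hs : ∀ i : Fin l, (G *ᵥ x) i.succ = nv i * x 0 + nv i ^ 2 * x i.succ := by
      intro i
      simp only [mulVec, dotProduct]
      rw [Fin.sum_univ_succ, (hG0j i).2]
      congr 1
      rw [Finset.sum_eq_single i (fun b _ hb => by rw [hGij i b (Ne.symm hb), zero_mul])
        (by simp), hGjj]
    have key : x ⬝ᵥ (G *ᵥ x)
        = (nstar - l) * x 0 ^ 2 + ∑ j : Fin l, (nv j * x j.succ + x 0) ^ 2 := by
      simp only [dotProduct]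
      rw [Fin.sum_univ_succ, h0]
      have h1 : ∀ i : Fin l, x i.succ * (G *ᵥ x) i.succ
          = nv i * x i.succ * x 0 + (nv i * x i.succ) ^ 2 := by
        intro i; rw [hs]; ring
      have h2 : ∀ j : Fin l, (nv j * x j.succ + x 0) ^ 2
          = (nv j * x j.succ) ^ 2 + 2 * (nv j * x j.succ) * x 0 + x 0 ^ 2 := fun j => by ring
      rw [Finset.sum_congr rfl fun i _ => h1 i, Finset.sum_congr rfl fun j _ => h2 j]
      simp only [Finset.sum_add_distrib, Finset.sum_const, Finset.card_univ,
        Fintype.card_fin, nsmul_eq_mul, Finset.mul_sum, Finset.sum_mul]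
      ring_nf
      have e : x 0 * ∑ j : Fin l, nv j * x j.succ + ∑ j : Fin l, nv j * x j.succ * x 0
          = ∑ j : Fin l, 2 * nv j * x j.succ * x 0 := by
        rw [Finset.mul_sum, ← Finset.sum_add_distrib]
        exact Finset.sum_congr rfl fun j _ => by ring
      ring_nf at e
      linarith [e]
    have hpos : 0 < x ⬝ᵥ (G *ᵥ x) := by
      rw [key]
      rcases eq_or_ne (x 0) 0 with hx0 | hx0
      · have hex : ∃ i : Fin l, x i.succ ≠ 0 := by
          by_contra h
          push_neg at h
          apply hx
          funext i
          refine Fin.cases hx0 h i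
        obtain ⟨j, hj⟩ := hex
        have : 0 < ∑ j : Fin l, (nv j * x j.succ + x 0) ^ 2 := by
          refine Finset.sum_pos' (fun j _ => sq_nonneg _) ⟨j, Finset.mem_univ j, ?_⟩
          rw [hx0, add_zero]
          have := hnvpos j
          positivity
        nlinarith [sq_nonneg (x 0)]
      · have h1 : 0 < (nstar - l) * x 0 ^ 2 := by
          have : (0:ℝ) < nstar - l := by linarith
          positivity
        have h2 : 0 ≤ ∑ j : Fin l, (nv j * x j.succ + x 0) ^ 2 :=
          Finset.sum_nonneg fun j _ => sq_nonneg _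
        linarith
    simpa using hpos
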